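/- Let μ be a positive Borel measure on [0,1). Then sup_{w∈𝔻} |∫_0^1 (1-|w|²)/(1 - w̄ t)² dμ(t)| < ∞ if and only if μ[n] = O(1/n), where μ[n] = ∫_0^1 t^n dμ(t). -/

import Mathlib

open MeasureTheory Complex Metric

lemma aux_exp (s : ℝ) (hs : 0 ≤ s) : Real.exp (-s) * (1 + s) ^ 2 ≤ 4 := by
  have h1 : s / 2 + 1 ≤ Real.exp (s / 2) := Real.add_one_le_exp (s / 2)
  have h2 : (1 + s) ≤ 2 * Real.exp (s / 2) := by linarith
  have h3 : Real.exp (-s) * Real.exp (s / 2) * Real.exp (s / 2) = 1 := by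
    rw [← Real.exp_add, ← Real.exp_add, show -s + s / 2 + s / 2 = 0 by ring, Real.exp_zero]
  have he : 0 < Real.exp (s / 2) := Real.exp_pos _
  have hne : 0 < Real.exp (-s) := Real.exp_pos _
  have h4 : (1 + s) ^ 2 ≤ 4 * (Real.exp (s / 2) * Real.exp (s / 2)) := by nlinarith
  calc Real.exp (-s) * (1 + s) ^ 2
      ≤ Real.exp (-s) * (4 * (Real.exp (s / 2) * Real.exp (s / 2))) :=
        mul_le_mul_of_nonneg_left h4 hne.le
    _ = 4 := by nlinarith

lemma key_pointwise (n : ℕ) (hn : 1 ≤ n) (t : ℝ) (ht : 0 ≤ t) (ht1 : t < 1) :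
    (n : ℝ) * t ^ n ≤ 4 * ((1 - (1 - 1 / n) ^ 2) / (1 - (1 - 1 / n) * t) ^ 2) := by
  set N : ℝ := (n : ℝ) with hN
  have hN1 : (1 : ℝ) ≤ N := by rw [hN]; exact_mod_cast hn
  have hN0 : 0 < N := lt_of_lt_of_le one_pos hN1
  set r : ℝ := 1 - 1 / N with hr
  have hr0 : 0 ≤ r := by
    have : 1 / N ≤ 1 := by rw [div_le_one hN0]; exact hN1
    rw [hr]; linarith
  have hr1 : r < 1 := by
    have : 0 < 1 / N := by positivity
    rw [hr]; linarith
  have hrt : 0 < 1 - r * t := by nlinarith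
  set s : ℝ := N * (1 - t) with hsdef
  have hs : 0 ≤ s := by nlinarith
  -- t^n ≤ exp(-s)
  have h1 : t ^ n ≤ Real.exp (-s) := by
    have ha : t ≤ Real.exp (-(1 - t)) := by
      have := Real.add_one_le_exp (-(1 - t)); linarith
    calc t ^ n ≤ Real.exp (-(1 - t)) ^ n := pow_le_pow_left₀ ht ha n
      _ = Real.exp (-s) := by
          rw [← Real.exp_nat_mul]; congr 1; rw [hsdef]; push_cast; ring
  have h2 : Real.exp (-s) * (1 + s) ^ 2 ≤ 4 := aux_exp s hs
  have h4 : N * (1 - r * t) ≤ 1 + s := by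
    have : 1 - r * t = (1 - t) + t / N := by rw [hr]; ring
    rw [this]; rw [hsdef]
    have : N * (t / N) = t := by field_simp
    nlinarith
  have h5 : 1 / N ≤ 1 - r ^ 2 := by
    have : 1 - r ^ 2 = (1 / N) * (2 - 1 / N) := by rw [hr]; ring
    rw [this]
    have h6 : 1 / N ≤ 1 := by rw [div_le_one hN0]; exact hN1
    have h7 : 0 < 1 / N := by positivity
    nlinarith
  have h6 : (N * (1 - r * t)) ^ 2 ≤ (1 + s) ^ 2 := by
    apply pow_le_pow_left₀ (by positivity) h4
  have h7 : t ^ n * (N * (1 - r * t)) ^ 2 ≤ Real.exp (-s) * (1 + s) ^ 2 := by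
    apply mul_le_mul h1 h6 (by positivity) (Real.exp_nonneg _)
  have h8 : t ^ n * (N * (1 - r * t)) ^ 2 ≤ 4 := h7.trans h2
  rw [show 4 * ((1 - r ^ 2) / (1 - r * t) ^ 2) = (4 * (1 - r ^ 2)) / (1 - r * t) ^ 2 by ring,
    le_div_iff₀ (by positivity)]
  have h9 : 1 ≤ N * (1 - r ^ 2) := by
    have := mul_le_mul_of_nonneg_left h5 (le_of_lt hN0)
    rw [mul_one_div, div_self (ne_of_gt hN0)] at this; linarith
  nlinarith [pow_nonneg ht n, sq_nonneg (1 - r * t)]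

/-- For a positive finite Borel measure `μ` on `[0,1)`,
`sup_{w∈𝔻} |∫₀¹ (1-|w|²)/(1-w̄t)² dμ(t)| < ∞` iff `μ[n] = O(1/n)`. -/
theorem statement14 (μ : Measure ℝ) [IsFiniteMeasure μ]
    (hsupp : ∀ᵐ t ∂μ, t ∈ Set.Ico (0 : ℝ) 1) :
    (∃ C : ℝ, ∀ w ∈ Metric.ball (0 : ℂ) 1,
        ‖∫ t, (((1 - ‖w‖ ^ 2 : ℝ) : ℂ) / (1 - (starRingEnd ℂ) w * (t : ℂ)) ^ 2) ∂μ‖ ≤ C)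
      ↔ ∃ C : ℝ, ∀ n : ℕ, (n : ℝ) * ∫ t, t ^ n ∂μ ≤ C := by
  constructor
  · rintro ⟨C, hC⟩
    have hC0 : 0 ≤ C := le_trans (norm_nonneg _) (hC 0 (by simp))
    refine ⟨4 * C, fun n => ?_⟩
    rcases Nat.eq_zero_or_pos n with hn | hn
    · simp only [hn, Nat.cast_zero, zero_mul]; positivity
    -- setup r
    have hN1 : (1 : ℝ) ≤ (n : ℝ) := by exact_mod_cast hn
    have hN0 : (0 : ℝ) < n := by linarith
    set r : ℝ := 1 - 1 / (n : ℝ) with hr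
    have hinv1 : 1 / (n : ℝ) ≤ 1 := by rw [div_le_one hN0]; exact hN1
    have hinv0 : 0 < 1 / (n : ℝ) := by positivity
    have hr0 : 0 ≤ r := by rw [hr]; linarith
    have hr1 : r < 1 := by rw [hr]; linarith
    have hw : (r : ℂ) ∈ Metric.ball (0 : ℂ) 1 := by
      rw [mem_ball_zero_iff, Complex.norm_real, Real.norm_eq_abs, _root_.abs_of_nonneg hr0]
      exact hr1
    have hC' := hC _ hw
    have heq : ∀ t : ℝ, (((1 - ‖(r : ℂ)‖ ^ 2 : ℝ) : ℂ) / (1 - (starRingEnd ℂ) (r : ℂ) * (t : ℂ)) ^ 2)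
        = (((1 - r ^ 2) / (1 - r * t) ^ 2 : ℝ) : ℂ) := by
      intro t
      rw [Complex.conj_ofReal, Complex.norm_real, Real.norm_eq_abs, _root_.sq_abs]
      push_cast
      ring
    have hieq : (∫ t, (((1 - ‖(r : ℂ)‖ ^ 2 : ℝ) : ℂ) / (1 - (starRingEnd ℂ) (r : ℂ) * (t : ℂ)) ^ 2) ∂μ)
        = ((∫ t, (1 - r ^ 2) / (1 - r * t) ^ 2 ∂μ : ℝ) : ℂ) := by
      rw [integral_congr_ae (Filter.Eventually.of_forall heq)]
      exact integral_ofReal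
    rw [hieq, Complex.norm_real, Real.norm_eq_abs] at hC'
    have hkle : (∫ t, (1 - r ^ 2) / (1 - r * t) ^ 2 ∂μ) ≤ C := le_trans (le_abs_self _) hC'
    -- integrability
    have hrpos : 0 < 1 - r := by linarith
    have hmeas_k : AEStronglyMeasurable (fun t : ℝ => (1 - r ^ 2) / (1 - r * t) ^ 2) μ := by
      apply Measurable.aestronglyMeasurable
      exact measurable_const.div (((measurable_const.sub (measurable_id.const_mul r)).pow_const 2))
    have hbound : ∀ᵐ t ∂μ, ‖(1 - r ^ 2) / (1 - r * t) ^ 2‖ ≤ (1 - r ^ 2) / (1 - r) ^ 2 := by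
      filter_upwards [hsupp] with t ht
      obtain ⟨ht0, ht1⟩ := ht
      have h1 : 1 - r ≤ 1 - r * t := by nlinarith
      have h2 : 0 < 1 - r * t := lt_of_lt_of_le hrpos h1
      rw [Real.norm_eq_abs, _root_.abs_of_nonneg (div_nonneg (by nlinarith) (by positivity))]
      apply div_le_div_of_nonneg_left (by nlinarith) (by positivity)
      exact pow_le_pow_left₀ hrpos.le h1 2
    have hint_k : Integrable (fun t : ℝ => (1 - r ^ 2) / (1 - r * t) ^ 2) μ :=
      Integrable.mono' (integrable_const _) hmeas_k hbound
    have hint_p : Integrable (fun t : ℝ => (n : ℝ) * t ^ n) μ := by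
      apply Integrable.mono' (integrable_const ((n : ℝ))) ((continuous_const.mul (continuous_pow n)).aestronglyMeasurable)
      filter_upwards [hsupp] with t ht
      obtain ⟨ht0, ht1⟩ := ht
      show ‖(n : ℝ) * t ^ n‖ ≤ n
      rw [Real.norm_eq_abs, _root_.abs_of_nonneg (by positivity)]
      nlinarith [pow_le_one₀ ht0 ht1.le (n := n)]
    have hmono : (∫ t, (n : ℝ) * t ^ n ∂μ) ≤ ∫ t, 4 * ((1 - r ^ 2) / (1 - r * t) ^ 2) ∂μ := by
      apply integral_mono_ae hint_p (hint_k.const_mul 4)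
      filter_upwards [hsupp] with t ht
      exact key_pointwise n hn t ht.1 ht.2
    rw [integral_const_mul, integral_const_mul] at hmono
    linarith
  · rintro ⟨C, hC⟩
    set M : ℝ := ∫ t, (1 : ℝ) ∂μ with hM
    have hmom_nonneg : ∀ n : ℕ, 0 ≤ ∫ t, t ^ n ∂μ := fun n =>
      integral_nonneg_of_ae (by filter_upwards [hsupp] with t ht; exact pow_nonneg ht.1 n)
    have hmom_int : ∀ n : ℕ, Integrable (fun t : ℝ => t ^ n) μ := by
      intro n
      apply Integrable.mono' (integrable_const (1 : ℝ)) (continuous_pow n).aestronglyMeasurable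
      filter_upwards [hsupp] with t ht
      rw [Real.norm_eq_abs, _root_.abs_of_nonneg (pow_nonneg ht.1 n)]
      exact pow_le_one₀ ht.1 ht.2.le
    have hC0 : 0 ≤ C := le_trans (by simpa using hmom_nonneg 1) (by simpa using hC 1)
    have hM0 : 0 ≤ M := integral_nonneg fun t => zero_le_one
    have hmom_le : ∀ n : ℕ, ((n : ℝ) + 1) * ∫ t, t ^ n ∂μ ≤ M + 2 * C := by
      intro n
      rcases Nat.eq_zero_or_pos n with h0 | h0
      · subst h0; simp only [Nat.cast_zero, zero_add, one_mul, pow_zero]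
        rw [← hM]; linarith
      · have h1 : (1 : ℝ) ≤ n := by exact_mod_cast h0
        have h2 := hC n
        have h3 := hmom_nonneg n
        nlinarith
    refine ⟨2 * (M + 2 * C), fun w hw => ?_⟩
    rw [mem_ball_zero_iff] at hw
    set a := ‖w‖ with ha
    have ha0 : 0 ≤ a := norm_nonneg w
    have ha2 : 0 ≤ 1 - a ^ 2 := by nlinarith
    set F : ℕ → ℝ → ℂ := fun n t =>
        (((1 - a ^ 2 : ℝ) : ℂ) * ((n : ℂ) + 1) * ((starRingEnd ℂ) w) ^ n) * ((t : ℂ)) ^ n with hF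
    have hFint : ∀ n, Integrable (F n) μ := by
      intro n
      apply Integrable.const_mul
      have : Integrable (fun t : ℝ => ((t ^ n : ℝ) : ℂ)) μ := (hmom_int n).ofReal
      simpa using this
    have hnormint : ∀ n : ℕ,
        (∫ t, ‖F n t‖ ∂μ) = ((1 - a ^ 2) * ((n : ℝ) + 1) * a ^ n) * ∫ t, t ^ n ∂μ := by
      intro n
      rw [← integral_const_mul]
      apply integral_congr_ae
      filter_upwards [hsupp] with t ht
      have hcast : ((n : ℂ) + 1) = (((n : ℝ) + 1 : ℝ) : ℂ) := by push_cast; ring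
      simp only [hF, hcast, norm_mul, norm_pow, Complex.norm_real, RCLike.norm_conj,
        Real.norm_eq_abs, _root_.abs_of_nonneg ha2,
        _root_.abs_of_nonneg (by positivity : (0:ℝ) ≤ (n:ℝ)+1), _root_.abs_of_nonneg ht.1]
      all_goals ring
    have hbound : ∀ n : ℕ, (∫ t, ‖F n t‖ ∂μ) ≤ (M + 2 * C) * ((1 - a ^ 2) * a ^ n) := by
      intro n
      rw [hnormint n, show (1 - a ^ 2) * ((n : ℝ) + 1) * a ^ n * ∫ t, t ^ n ∂μ
          = ((1 - a ^ 2) * a ^ n) * (((n : ℝ) + 1) * ∫ t, t ^ n ∂μ) by ring]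
      calc ((1 - a ^ 2) * a ^ n) * (((n : ℝ) + 1) * ∫ t, t ^ n ∂μ)
          ≤ ((1 - a ^ 2) * a ^ n) * (M + 2 * C) :=
            mul_le_mul_of_nonneg_left (hmom_le n) (by positivity)
        _ = (M + 2 * C) * ((1 - a ^ 2) * a ^ n) := by ring
    have hgeo : Summable (fun n : ℕ => (M + 2 * C) * ((1 - a ^ 2) * a ^ n)) :=
      ((summable_geometric_of_lt_one ha0 hw).mul_left _).mul_left _
    have hFnorm_nonneg : ∀ n, 0 ≤ ∫ t, ‖F n t‖ ∂μ := fun n => integral_nonneg fun t => norm_nonneg _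
    have hFsum : Summable (fun n => ∫ t, ‖F n t‖ ∂μ) :=
      Summable.of_nonneg_of_le hFnorm_nonneg hbound hgeo
    have hswap := integral_tsum_of_summable_integral_norm hFint hFsum
    have hpt : ∀ᵐ t ∂μ, (∑' n, F n t)
        = (((1 - a ^ 2 : ℝ) : ℂ) / (1 - (starRingEnd ℂ) w * (t : ℂ)) ^ 2) := by
      filter_upwards [hsupp] with t ht
      set z : ℂ := (starRingEnd ℂ) w * (t : ℂ) with hz
      have hzn : ‖z‖ < 1 := by
        rw [hz, norm_mul, RCLike.norm_conj, Complex.norm_real, Real.norm_eq_abs,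
          _root_.abs_of_nonneg ht.1]
        calc a * t ≤ a * 1 := mul_le_mul_of_nonneg_left ht.2.le ha0
          _ = a := mul_one a
          _ < 1 := hw
      have hs1 : HasSum (fun n : ℕ => (((n + 1).choose 1 : ℕ) : ℂ) * z ^ n) (1 / (1 - z) ^ 2) := by
        simpa using hasSum_choose_mul_geometric_of_norm_lt_one 1 hzn
      have hs1' : HasSum (fun n : ℕ => ((n : ℂ) + 1) * z ^ n) (1 / (1 - z) ^ 2) := by
        have hfe : (fun n : ℕ => ((n : ℂ) + 1) * z ^ n)
            = fun n : ℕ => (((n + 1).choose 1 : ℕ) : ℂ) * z ^ n := by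
          funext n
          simp [Nat.choose_one_right]
        rw [hfe]; exact hs1
      have hs2 : HasSum (fun n : ℕ => ((1 - a ^ 2 : ℝ) : ℂ) * (((n : ℂ) + 1) * z ^ n))
          (((1 - a ^ 2 : ℝ) : ℂ) * (1 / (1 - z) ^ 2)) := hs1'.mul_left _
      calc (∑' n, F n t) = ∑' n : ℕ, ((1 - a ^ 2 : ℝ) : ℂ) * (((n : ℂ) + 1) * z ^ n) := by
            congr 1; funext n; simp only [hF, hz]; push_cast; ring
        _ = ((1 - a ^ 2 : ℝ) : ℂ) * (1 / (1 - z) ^ 2) := hs2.tsum_eq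
        _ = ((1 - a ^ 2 : ℝ) : ℂ) / (1 - z) ^ 2 := by ring
    have hEq : (∫ t, (((1 - a ^ 2 : ℝ) : ℂ) / (1 - (starRingEnd ℂ) w * (t : ℂ)) ^ 2) ∂μ)
        = ∑' n, ∫ t, F n t ∂μ := by
      rw [hswap]; exact (integral_congr_ae hpt).symm
    rw [hEq]
    have hnorm_each : ∀ n, ‖∫ t, F n t ∂μ‖ ≤ ∫ t, ‖F n t‖ ∂μ := fun n =>
      norm_integral_le_integral_norm _
    have hsum_int : Summable (fun n => ‖∫ t, F n t ∂μ‖) :=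
      Summable.of_nonneg_of_le (fun n => norm_nonneg _) hnorm_each hFsum
    calc ‖∑' n, ∫ t, F n t ∂μ‖ ≤ ∑' n, ‖∫ t, F n t ∂μ‖ := norm_tsum_le_tsum_norm hsum_int
      _ ≤ ∑' n : ℕ, (M + 2 * C) * ((1 - a ^ 2) * a ^ n) :=
          Summable.tsum_le_tsum (fun n => (hnorm_each n).trans (hbound n)) hsum_int hgeo
      _ = (M + 2 * C) * ((1 - a ^ 2) * ∑' n : ℕ, a ^ n) := by rw [tsum_mul_left, tsum_mul_left]
      _ = (M + 2 * C) * ((1 - a ^ 2) * (1 - a)⁻¹) := by rw [tsum_geometric_of_lt_one ha0 hw]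
      _ ≤ 2 * (M + 2 * C) := by
          have h1a : 0 < 1 - a := by linarith
          have heq2 : (1 - a ^ 2) * (1 - a)⁻¹ = 1 + a := by field_simp; ring
          rw [heq2]; nlinarith
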